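/- Define S_n = sum_{k=0}^{n-3} (-1)^k * C(2k,k) * C(n-3,k) * C(k, n-k-3) for n >= 3 (and S_n = 0 for n < 3). Then for every non-negative integer n, S_{3n} ≡ S_{3n+1} ≡ -S_{3n+2} (mod 3). -/
import Mathlib

open Finset

/-- `S n = ∑_{k=0}^{n-3} (-1)^k C(2k,k) C(n-3,k) C(k, n-k-3)`, with `S n = 0` for `n < 3`. -/
def S (n : ℕ) : ℤ :=
  ∑ k ∈ Finset.range (n - 2),
    (-1) ^ k * ((2 * k).choose k : ℤ) * ((n - 3).choose k : ℤ) * (k.choose (n - k - 3) : ℤ)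

lemma lucas3' (x y a b r s : ℕ) (hx : x = 3*a+r) (hy : y = 3*b+s) (hr : r < 3) (hs : s < 3) :
    (x.choose y : ZMod 3) = (a.choose b : ZMod 3) * (r.choose s : ZMod 3) := by
  subst hx hy
  have h := @Choose.choose_modEq_choose_mod_mul_choose_div (3*a+r) (3*b+s) 3 ⟨Nat.prime_three⟩
  have h1 : (3*a+r) % 3 = r := by omega
  have h2 : (3*a+r) / 3 = a := by omega
  have h3 : (3*b+s) % 3 = s := by omega
  have h4 : (3*b+s) / 3 = b := by omega
  rw [h1, h2, h3, h4] at h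
  have h5 := (ZMod.intCast_eq_intCast_iff _ _ _).mpr h
  push_cast at h5
  rw [h5]; ring

def t (m k : ℕ) : ZMod 3 :=
  (-1)^k * ((2*k).choose k : ZMod 3) * ((m-3).choose k : ZMod 3) * ((k.choose (m-k-3) : ℕ) : ZMod 3)

lemma hS (m : ℕ) : ((S m : ℤ) : ZMod 3) = ∑ k ∈ range (m-2), t m k := by
  simp [S, t]

lemma term1 (m k : ℕ) (hk : k < 3*m+1) : t (3*m+3) k = t (3*m+4) (k+1) := by
  obtain ⟨j, r, hr, rfl⟩ : ∃ j r, r < 3 ∧ k = 3*j + r :=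
    ⟨k/3, k%3, Nat.mod_lt _ (by norm_num), by omega⟩
  interval_cases r
  · -- r = 0
    obtain ⟨e, rfl⟩ : ∃ e, m = j + e := ⟨m - j, by omega⟩
    simp only [t]
    rw [lucas3' (2*(3*j+0)) (3*j+0) (2*j) j 0 0 (by ring) (by omega) (by omega) (by omega),
        lucas3' (3*(j+e)+3-3) (3*j+0) (j+e) j 0 0 (by omega) (by omega) (by omega) (by omega),
        lucas3' (3*j+0) (3*(j+e)+3-(3*j+0)-3) j e 0 0 (by omega) (by omega) (by omega) (by omega),
        lucas3' (2*(3*j+0+1)) (3*j+0+1) (2*j) j 2 1 (by ring) (by omega) (by omega) (by omega),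
        lucas3' (3*(j+e)+4-3) (3*j+0+1) (j+e) j 1 1 (by omega) (by omega) (by omega) (by omega),
        lucas3' (3*j+0+1) (3*(j+e)+4-(3*j+0+1)-3) j e 1 0 (by omega) (by omega) (by omega)
          (by omega)]
    norm_num [pow_succ]
    rw [show (2:ZMod 3) = -1 by decide]
    ring
  · -- r = 1 : both sides vanish
    simp only [t]
    rw [lucas3' (3*m+3-3) (3*j+1) m j 0 1 (by omega) (by omega) (by omega) (by omega),
        lucas3' (2*(3*j+1+1)) (3*j+1+1) (2*j+1) j 1 2 (by ring) (by omega) (by omega) (by omega)]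
    simp [Nat.choose]
  · -- r = 2 : both sides vanish
    obtain ⟨e, rfl⟩ : ∃ e, m = j + 1 + e := ⟨m - j - 1, by omega⟩
    simp only [t]
    rw [lucas3' (2*(3*j+2)) (3*j+2) (2*j+1) j 1 2 (by ring) (by omega) (by omega) (by omega),
        lucas3' (3*j+2+1) (3*(j+1+e)+4-(3*j+2+1)-3) (j+1) e 0 1 (by omega) (by omega) (by omega)
          (by omega)]
    simp [Nat.choose]

lemma term2 (m k : ℕ) (hk : k < 3*m+2) : t (3*m+5) k = - t (3*m+4) k := by
  obtain ⟨j, r, hr, rfl⟩ : ∃ j r, r < 3 ∧ k = 3*j + r :=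
    ⟨k/3, k%3, Nat.mod_lt _ (by norm_num), by omega⟩
  interval_cases r
  · -- r = 0 : both sides vanish
    obtain ⟨e, rfl⟩ : ∃ e, m = j + e := ⟨m - j, by omega⟩
    simp only [t]
    rw [lucas3' (3*j+0) (3*(j+e)+5-(3*j+0)-3) j e 0 2 (by omega) (by omega) (by omega) (by omega),
        lucas3' (3*j+0) (3*(j+e)+4-(3*j+0)-3) j e 0 1 (by omega) (by omega) (by omega) (by omega)]
    simp [Nat.choose]
  · -- r = 1
    obtain ⟨e, rfl⟩ : ∃ e, m = j + e := ⟨m - j, by omega⟩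
    simp only [t]
    rw [lucas3' (2*(3*j+1)) (3*j+1) (2*j) j 2 1 (by ring) (by omega) (by omega) (by omega),
        lucas3' (3*(j+e)+5-3) (3*j+1) (j+e) j 2 1 (by omega) (by omega) (by omega) (by omega),
        lucas3' (3*j+1) (3*(j+e)+5-(3*j+1)-3) j e 1 1 (by omega) (by omega) (by omega) (by omega),
        lucas3' (3*(j+e)+4-3) (3*j+1) (j+e) j 1 1 (by omega) (by omega) (by omega) (by omega),
        lucas3' (3*j+1) (3*(j+e)+4-(3*j+1)-3) j e 1 0 (by omega) (by omega) (by omega) (by omega)]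
    norm_num
    rw [show (2:ZMod 3) = -1 by decide]
    ring
  · -- r = 2 : both sides vanish
    simp only [t]
    rw [lucas3' (2*(3*j+2)) (3*j+2) (2*j+1) j 1 2 (by ring) (by omega) (by omega) (by omega)]
    simp [Nat.choose]

lemma sum1 (m : ℕ) : ∑ k ∈ range (3*m+1), t (3*m+3) k = ∑ k ∈ range (3*m+2), t (3*m+4) k := by
  conv_rhs => rw [show 3*m+2 = (3*m+1)+1 from rfl, Finset.sum_range_succ']
  have h0 : t (3*m+4) 0 = 0 := by
    have hz : (0:ℕ).choose (3*m+4-0-3) = 0 := Nat.choose_eq_zero_of_lt (by omega)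
    simp [t, hz]
  rw [h0, add_zero]
  exact Finset.sum_congr rfl fun k hk => term1 m k (mem_range.mp hk)

lemma sum2 (m : ℕ) : ∑ k ∈ range (3*m+2), t (3*m+4) k = - ∑ k ∈ range (3*m+3), t (3*m+5) k := by
  conv_rhs => rw [show 3*m+3 = (3*m+2)+1 from rfl, Finset.sum_range_succ]
  have hlast : t (3*m+5) (3*m+2) = 0 := by
    simp only [t]
    rw [lucas3' (2*(3*m+2)) (3*m+2) (2*m+1) m 1 2 (by ring) (by omega) (by omega) (by omega)]
    simp [Nat.choose]
  rw [hlast, add_zero,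
    Finset.sum_congr rfl (fun k hk => term2 m k (mem_range.mp hk)), Finset.sum_neg_distrib,
    neg_neg]

theorem stmt_9 (n : ℕ) :
    (3 : ℤ) ∣ S (3 * n) - S (3 * n + 1) ∧ (3 : ℤ) ∣ S (3 * n + 1) + S (3 * n + 2) := by
  rcases n with _ | m
  · constructor <;> simp [S]
  · constructor
    · have key : ((S (3*(m+1)) - S (3*(m+1)+1) : ℤ) : ZMod 3) = 0 := by
        rw [show 3*(m+1) = 3*m+3 from by ring, show 3*m+3+1 = 3*m+4 from rfl,
          Int.cast_sub, hS, hS, show 3*m+3-2 = 3*m+1 from by omega,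
          show 3*m+4-2 = 3*m+2 from by omega, sum1, sub_self]
      exact_mod_cast (ZMod.intCast_zmod_eq_zero_iff_dvd _ 3).mp key
    · have key : ((S (3*(m+1)+1) + S (3*(m+1)+2) : ℤ) : ZMod 3) = 0 := by
        rw [show 3*(m+1)+1 = 3*m+4 from by ring, show 3*(m+1)+2 = 3*m+5 from by ring,
          Int.cast_add, hS, hS, show 3*m+4-2 = 3*m+2 from by omega,
          show 3*m+5-2 = 3*m+3 from by omega, sum2, neg_add_cancel]
      exact_mod_cast (ZMod.intCast_zmod_eq_zero_iff_dvd _ 3).mp key
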